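/- Let σ ⊆ ℚⁿ be a pointed polyhedral cone and Δ₁, Δ₂ two σ-polyhedra. If h_{Δ₁}(m) = h_{Δ₂}(m) for all lattice points m ∈ σ∨ ∩ ℤⁿ lying in the relative interior of σ∨, then Δ₁ = Δ₂. -/

import Mathlib

open scoped Pointwise
open Finset

namespace Paper

/-- Standard pairing on `ℚⁿ`. -/
def dot {n : ℕ} (m v : Fin n → ℚ) : ℚ := ∑ i, m i * v i

/-- Dual cone `σ∨ = {m | ∀ v ∈ σ, ⟨m,v⟩ ≥ 0}`. -/
def dualCone {n : ℕ} (σ : Set (Fin n → ℚ)) : Set (Fin n → ℚ) :=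
  {m | ∀ v ∈ σ, 0 ≤ dot m v}

/-- A polyhedral cone: the cone generated by finitely many vectors. -/
def IsPolyhedralCone {n : ℕ} (σ : Set (Fin n → ℚ)) : Prop :=
  ∃ (k : ℕ) (g : Fin k → Fin n → ℚ),
    σ = {v | ∃ c : Fin k → ℚ, (∀ i, 0 ≤ c i) ∧ v = ∑ i, c i • g i}

/-- A pointed (strongly convex) cone contains no line. -/
def Pointed {n : ℕ} (σ : Set (Fin n → ℚ)) : Prop := ∀ v ∈ σ, -v ∈ σ → v = 0

/-- The canonical embedding `ℤⁿ → ℚⁿ`. -/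
def Lq {n : ℕ} (m : Fin n → ℤ) : Fin n → ℚ := fun i => (m i : ℚ)

/-- A rational vector is a lattice point if all coordinates are integers. -/
def IsLatticePt {n : ℕ} (v : Fin n → ℚ) : Prop := ∀ i, ∃ z : ℤ, v i = (z : ℚ)

/-- A `σ`-polyhedron: Minkowski sum of a (nonempty) polytope with the cone `σ`. -/
def IsSigmaPolyhedron {n : ℕ} (σ Δ : Set (Fin n → ℚ)) : Prop :=
  ∃ F : Finset (Fin n → ℚ), F.Nonempty ∧ Δ = convexHull ℚ (↑F : Set (Fin n → ℚ)) + σ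

/-- An integral `σv`-polyhedron: Minkowski sum of a lattice polytope with `σv`. -/
def IsIntegralPoly {n : ℕ} (σv P : Set (Fin n → ℚ)) : Prop :=
  ∃ F : Finset (Fin n → ℤ), F.Nonempty ∧ P = convexHull ℚ (Lq '' (↑F : Set (Fin n → ℤ))) + σv

/-- The `e`-fold Minkowski sum `eP` of `P`, with the convention `0P = σv`. -/
def mink {n : ℕ} (σv P : Set (Fin n → ℚ)) : ℕ → Set (Fin n → ℚ)
  | 0 => σv
  | 1 => P
  | (e + 2) => mink σv P (e + 1) + P

/-- The semigroup `σ∨ ∩ ℤⁿ` of lattice points of the dual cone. -/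
def latticeDual {n : ℕ} (σ : Set (Fin n → ℚ)) : AddSubmonoid (Fin n → ℤ) where
  carrier := {m | Lq m ∈ dualCone σ}
  zero_mem' := by
    intro v hv
    simp [dot, Lq]
  add_mem' := by
    intro a b ha hb v hv
    have h1 := ha v hv
    have h2 := hb v hv
    have h : dot (Lq (a + b)) v = dot (Lq a) v + dot (Lq b) v := by
      simp only [dot, Lq, Pi.add_apply]
      rw [← Finset.sum_add_distrib]
      apply Finset.sum_congr rfl
      intro i _
      push_cast
      ring
    rw [Set.mem_setOf_eq] at *
    simpa [dualCone, h] using add_nonneg h1 h2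

/-- The monomial `χ^m` in the semigroup algebra `k[σ∨ ∩ ℤⁿ]`. -/
noncomputable def mono (k : Type*) [CommRing k] {n : ℕ} (σ : Set (Fin n → ℚ))
    (m : latticeDual σ) : AddMonoidAlgebra k (latticeDual σ) :=
  AddMonoidAlgebra.single m 1

/-- The monomial ideal `I[P]` generated by the monomials `χ^m`, `m ∈ P ∩ ℤⁿ`. -/
noncomputable def idealOf (k : Type*) [CommRing k] {n : ℕ} (σ : Set (Fin n → ℚ))
    (P : Set (Fin n → ℚ)) : Ideal (AddMonoidAlgebra k (latticeDual σ)) :=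
  Ideal.span {f | ∃ m : latticeDual σ, Lq (m : Fin n → ℤ) ∈ P ∧ f = mono k σ m}

/-- `a` satisfies an equation of integral dependence over the ideal `I`:
`a^r + λ₁ a^(r-1) + ⋯ + λ_r = 0` with `λᵢ ∈ Iⁱ`. -/
def IntegralOverIdeal {A : Type*} [CommRing A] (I : Ideal A) (a : A) : Prop :=
  ∃ r : ℕ, 0 < r ∧ ∃ c : ℕ → A, (∀ i ∈ Finset.Icc 1 r, c i ∈ I ^ i) ∧
    a ^ r + ∑ i ∈ Finset.Icc 1 r, c i * a ^ (r - i) = 0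

/-- A monomial (torus-homogeneous) ideal of `k[σ∨ ∩ ℤⁿ]`. -/
def IsMonomialIdeal (k : Type*) [CommRing k] {n : ℕ} (σ : Set (Fin n → ℚ))
    (I : Ideal (AddMonoidAlgebra k (latticeDual σ))) : Prop :=
  ∃ S : Set (latticeDual σ), I = Ideal.span {f | ∃ m ∈ S, f = mono k σ m}

/-- The relative interior of the dual cone of a pointed cone `σ`:
those `m ∈ σ∨` pairing strictly positively with every nonzero `v ∈ σ`. -/
def relIntDual {n : ℕ} (σ : Set (Fin n → ℚ)) : Set (Fin n → ℚ) :=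
  {m | m ∈ dualCone σ ∧ ∀ v ∈ σ, v ≠ 0 → 0 < dot m v}

section Aux

variable {n : ℕ}

def inCone {n : ℕ} {ι : Type*} [Fintype ι] (g : ι → Fin n → ℚ) (b : Fin n → ℚ) : Prop :=
  ∃ c : ι → ℚ, (∀ i, 0 ≤ c i) ∧ b = ∑ i, c i • g i

lemma dot_comm (m v : Fin n → ℚ) : dot m v = dot v m :=
  Finset.sum_congr rfl fun i _ => mul_comm _ _

lemma dot_add_right (m a b : Fin n → ℚ) : dot m (a + b) = dot m a + dot m b := by
  unfold dot
  rw [← Finset.sum_add_distrib]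
  exact Finset.sum_congr rfl fun i _ => by simp [mul_add]

lemma dot_smul_right (m : Fin n → ℚ) (c : ℚ) (a : Fin n → ℚ) : dot m (c • a) = c * dot m a := by
  unfold dot
  rw [Finset.mul_sum]
  exact Finset.sum_congr rfl fun i _ => by simp [smul_eq_mul]; ring

lemma dot_sub_right (m a b : Fin n → ℚ) : dot m (a - b) = dot m a - dot m b := by
  unfold dot
  rw [← Finset.sum_sub_distrib]
  exact Finset.sum_congr rfl fun i _ => by simp [mul_sub]

lemma dot_neg_right (m a : Fin n → ℚ) : dot m (-a) = - dot m a := by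
  have := dot_sub_right m 0 a
  simpa [dot] using this

lemma dot_sum_right {ι : Type*} (m : Fin n → ℚ) (s : Finset ι) (f : ι → Fin n → ℚ) :
    dot m (∑ i ∈ s, f i) = ∑ i ∈ s, dot m (f i) := by
  unfold dot
  simp only [Finset.sum_apply, Finset.mul_sum]
  rw [Finset.sum_comm]

lemma dot_smul_left (c : ℚ) (m a : Fin n → ℚ) : dot (c • m) a = c * dot m a := by
  rw [dot_comm, dot_smul_right, dot_comm]

lemma dot_add_left (m m' a : Fin n → ℚ) : dot (m + m') a = dot m a + dot m' a := by
  rw [dot_comm, dot_add_right, dot_comm m a, dot_comm m' a]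

lemma dot_sum_left {ι : Type*} (s : Finset ι) (f : ι → Fin n → ℚ) (a : Fin n → ℚ) :
    dot (∑ i ∈ s, f i) a = ∑ i ∈ s, dot (f i) a := by
  rw [dot_comm, dot_sum_right]
  exact Finset.sum_congr rfl fun i _ => dot_comm _ _

lemma dot_self_pos {v : Fin n → ℚ} (hv : v ≠ 0) : 0 < dot v v := by
  obtain ⟨i, hi⟩ := Function.ne_iff.1 hv
  exact Finset.sum_pos' (fun j _ => mul_self_nonneg _)
    ⟨i, Finset.mem_univ i, mul_self_pos.2 hi⟩

lemma dot_sum_smul_right {ι : Type*} (m : Fin n → ℚ) (s : Finset ι) (c : ι → ℚ)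
    (g : ι → Fin n → ℚ) : dot m (∑ i ∈ s, c i • g i) = ∑ i ∈ s, c i * dot m (g i) := by
  rw [dot_sum_right]
  exact Finset.sum_congr rfl fun i _ => dot_smul_right _ _ _

/-- Farkas lemma over `ℚ`, generators indexed by `Fin k`. -/
lemma farkas_fin {n : ℕ} :
    ∀ (k : ℕ) (g : Fin k → Fin n → ℚ) (b : Fin n → ℚ), ¬ inCone g b →
      ∃ w : Fin n → ℚ, (∀ i, 0 ≤ dot w (g i)) ∧ dot w b < 0 := by
  intro k
  induction k with
  | zero =>
    intro g b hb
    have hb0 : b ≠ 0 := by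
      rintro rfl
      exact hb ⟨0, fun i => le_refl _, by simp⟩
    exact ⟨-b, fun i => i.elim0, by
      rw [dot_comm, dot_neg_right]
      simpa using dot_self_pos hb0⟩
  | succ k ih =>
    intro g b hb
    set a := g (Fin.last k) with ha
    set g' : Fin k → Fin n → ℚ := fun i => g i.castSucc with hg'
    have hb' : ¬ inCone g' b := by
      rintro ⟨c, hc, rfl⟩
      refine hb ⟨Fin.snoc c 0, ?_, ?_⟩
      · intro i
        induction i using Fin.lastCases with
        | last => simp
        | cast i => simpa using hc i
      · rw [Fin.sum_univ_castSucc]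
        simp [hg']
    obtain ⟨w, hw1, hw2⟩ := ih g' b hb'
    by_cases h3 : 0 ≤ dot w a
    · refine ⟨w, ?_, hw2⟩
      intro i
      induction i using Fin.lastCases with
      | last => exact h3
      | cast i => exact hw1 i
    · push_neg at h3
      set α := dot w a with hα
      have hα0 : α ≠ 0 := ne_of_lt h3
      set proj : (Fin n → ℚ) → (Fin n → ℚ) := fun x => x - (dot w x / α) • a with hproj
      have hb'' : ¬ inCone (fun i => proj (g' i)) (proj b) := by
        rintro ⟨c, hc, hsum⟩
        set S := ∑ i, c i * dot w (g' i) with hS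
        have hSnn : 0 ≤ S := Finset.sum_nonneg fun i _ =>
          mul_nonneg (hc i) (hw1 i)
        set μ := (dot w b - S) / α with hμ
        have hμpos : 0 < μ := by
          apply div_pos_of_neg_of_neg _ h3
          linarith
        have hsum' : proj b = ∑ i, c i • proj (g' i) := by simpa using hsum
        have hkey : b = (∑ i, c i • g' i) + μ • a := by
          have expand : ∑ i, c i • proj (g' i)
              = (∑ i, c i • g' i) - (S / α) • a := by
            rw [hS, Finset.sum_div, Finset.sum_smul, ← Finset.sum_sub_distrib]
            refine Finset.sum_congr rfl fun i _ => ?_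
            rw [hproj]
            simp only [smul_sub, smul_smul]
            congr 2
            ring
          have h0 : b - (dot w b / α) • a = (∑ i, c i • g' i) - (S / α) • a := by
            rw [← expand, ← hsum']
          have hμa : μ • a = (dot w b / α) • a - (S / α) • a := by
            rw [show μ = dot w b / α - S / α by rw [hμ]; ring, sub_smul]
          calc b = b - (dot w b / α) • a + (dot w b / α) • a := by abel
            _ = (∑ i, c i • g' i) - (S / α) • a + (dot w b / α) • a := by rw [h0]
            _ = (∑ i, c i • g' i) + μ • a := by rw [hμa]; abel
        refine hb ⟨Fin.snoc c μ, ?_, ?_⟩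
        · intro i
          induction i using Fin.lastCases with
          | last => simpa using hμpos.le
          | cast i => simpa using hc i
        · rw [Fin.sum_univ_castSucc]
          simpa [hg'] using hkey
      obtain ⟨u, hu1, hu2⟩ := ih _ _ hb''
      have key : ∀ x, dot (u - (dot u a / α) • w) x = dot u (proj x) := by
        intro x
        rw [hproj]
        rw [dot_sub_right, dot_smul_right, dot_comm (u - _) x, dot_sub_right,
          dot_smul_right, dot_comm x u, dot_comm x w]
        ring
      refine ⟨u - (dot u a / α) • w, ?_, ?_⟩
      · intro i
        induction i using Fin.lastCases with
        | last =>
          rw [key]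
          have : proj a = 0 := by
            rw [hproj]
            simp [← hα, div_self hα0]
          rw [← ha, this]
          simp [dot]
        | cast i =>
          rw [key]
          exact hu1 i
      · rw [key]
        exact hu2

/-- Farkas lemma over `ℚ`, general finite index type. -/
lemma farkas {n : ℕ} {ι : Type*} [Fintype ι] (g : ι → Fin n → ℚ) (b : Fin n → ℚ)
    (hb : ¬ inCone g b) : ∃ w : Fin n → ℚ, (∀ i, 0 ≤ dot w (g i)) ∧ dot w b < 0 := by
  classical
  set e := Fintype.equivFin ι with he
  have hb2 : ¬ inCone (g ∘ e.symm) b := by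
    rintro ⟨c, hc, rfl⟩
    refine hb ⟨c ∘ e, fun i => hc _, ?_⟩
    exact Fintype.sum_equiv e.symm _ _ (fun j => by simp [Function.comp])
  obtain ⟨w, hw1, hw2⟩ := farkas_fin _ (g ∘ e.symm) b hb2
  refine ⟨w, fun i => ?_, hw2⟩
  simpa using hw1 (e i)

end Aux

section Main

variable {n k : ℕ} {σ : Set (Fin n → ℚ)} {g : Fin k → Fin n → ℚ}

lemma zero_mem_cone (hσ : σ = {v | inCone g v}) : (0 : Fin n → ℚ) ∈ σ := by
  rw [hσ]; exact ⟨0, fun i => le_refl _, by simp⟩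

lemma gen_mem_cone (hσ : σ = {v | inCone g v}) (i : Fin k) : g i ∈ σ := by
  rw [hσ]
  refine ⟨fun j => if j = i then 1 else 0, fun j => by dsimp only; split <;> norm_num, ?_⟩
  simp [ite_smul]

lemma isLinear_dot (m : Fin n → ℚ) : IsLinearMap ℚ (dot m) :=
  ⟨dot_add_right m, fun c a => by rw [dot_smul_right]; rfl⟩

lemma isLeast_support (hσ : σ = {v | inCone g v}) (F : Finset (Fin n → ℚ)) (hF : F.Nonempty)
    {m : Fin n → ℚ} (hm : m ∈ dualCone σ) :
    IsLeast ((fun v => dot m v) '' (convexHull ℚ (↑F : Set (Fin n → ℚ)) + σ))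
      (F.inf' hF fun f => dot m f) := by
  constructor
  · obtain ⟨f₀, hf₀, heq⟩ := F.exists_mem_eq_inf' hF (fun f => dot m f)
    refine ⟨f₀ + 0, Set.add_mem_add (subset_convexHull ℚ _ (by exact_mod_cast hf₀)) (zero_mem_cone hσ), ?_⟩
    rw [add_zero, heq]
  · rintro r ⟨x, hx, rfl⟩
    obtain ⟨p, hp, s, hs, rfl⟩ := hx
    have h1 : F.inf' hF (fun f => dot m f) ≤ dot m p := by
      have hcv : Convex ℚ {y : Fin n → ℚ | F.inf' hF (fun f => dot m f) ≤ dot m y} :=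
        convex_halfSpace_ge (isLinear_dot m) _
      have hst : (↑F : Set (Fin n → ℚ)) ⊆ {y : Fin n → ℚ | F.inf' hF (fun f => dot m f) ≤ dot m y} := by
        intro f hf
        show F.inf' hF (fun f => dot m f) ≤ dot m f
        exact Finset.inf'_le (fun f => dot m f) (by exact_mod_cast hf)
      exact convexHull_min hst hcv hp
    have h2 : 0 ≤ dot m s := hm s hs
    simp only [dot_add_right]
    linarith

lemma mem_relIntDual_of (hσ : σ = {v | inCone g v}) {m : Fin n → ℚ}
    (h : ∀ i, 0 ≤ dot m (g i)) (h' : ∀ i, g i ≠ 0 → 0 < dot m (g i)) :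
    m ∈ relIntDual σ := by
  have hdual : m ∈ dualCone σ := by
    intro v hv
    rw [hσ] at hv; obtain ⟨c, hc, rfl⟩ := hv
    rw [dot_sum_smul_right]
    exact Finset.sum_nonneg fun i _ => mul_nonneg (hc i) (h i)
  refine ⟨hdual, ?_⟩
  intro v hv hv0
  rw [hσ] at hv; obtain ⟨c, hc, rfl⟩ := hv
  rw [dot_sum_smul_right]
  have hex : ∃ i, c i • g i ≠ 0 := by
    by_contra hall; push_neg at hall
    exact hv0 (by rw [Finset.sum_congr rfl fun i _ => hall i]; simp)
  obtain ⟨i, hi⟩ := hex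
  have hci : c i ≠ 0 := fun h0 => hi (by simp [h0])
  have hgi : g i ≠ 0 := fun h0 => hi (by simp [h0])
  exact Finset.sum_pos' (fun j _ => mul_nonneg (hc j) (h j))
    ⟨i, Finset.mem_univ i, mul_pos (lt_of_le_of_ne (hc i) (Ne.symm hci)) (h' i hgi)⟩

lemma exists_relint_elt (hσ : σ = {v | inCone g v}) (hp : Pointed σ) :
    ∃ m₀ : Fin n → ℚ, (∀ i, 0 ≤ dot m₀ (g i)) ∧ (∀ i, g i ≠ 0 → 0 < dot m₀ (g i)) := by
  classical
  have hfar : ∀ i : Fin k, g i ≠ 0 → ∃ w, (∀ j, 0 ≤ dot w (g j)) ∧ dot w (-(g i)) < 0 := by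
    intro i hi
    apply farkas
    intro hcone
    have hneg : -(g i) ∈ σ := by rw [hσ]; exact hcone
    exact hi (hp (g i) (gen_mem_cone hσ i) hneg)
  choose w hw1 hw2 using hfar
  refine ⟨∑ i, if h : g i ≠ 0 then w i h else 0, ?_, ?_⟩
  · intro j
    rw [dot_sum_left]
    refine Finset.sum_nonneg fun i _ => ?_
    by_cases hgi : g i ≠ 0
    · rw [dif_pos hgi]; exact hw1 i hgi j
    · rw [dif_neg hgi]; simp [dot]
  · intro j hj
    rw [dot_sum_left]
    refine Finset.sum_pos' (fun i _ => ?_) ⟨j, Finset.mem_univ j, ?_⟩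
    · by_cases hgi : g i ≠ 0
      · rw [dif_pos hgi]; exact hw1 i hgi j
      · rw [dif_neg hgi]; simp [dot]
    · rw [dif_pos hj]
      have h2 := hw2 j hj
      rw [dot_neg_right] at h2
      linarith

lemma dot_snoc (W : Fin (n+1) → ℚ) (y : Fin n → ℚ) (t : ℚ) :
    dot W (Fin.snoc y t) = dot (fun j => W j.castSucc) y + W (Fin.last n) * t := by
  unfold dot
  rw [Fin.sum_univ_castSucc]
  simp

lemma relint_smul {m : Fin n → ℚ} {c : ℚ} (hc : 0 < c) (hm : m ∈ relIntDual σ) :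
    c • m ∈ relIntDual σ := by
  constructor
  · intro v hv; rw [dot_smul_left]; exact mul_nonneg hc.le (hm.1 v hv)
  · intro v hv hv0; rw [dot_smul_left]; exact mul_pos hc (hm.2 v hv hv0)

lemma exists_int_smul (m : Fin n → ℚ) :
    ∃ (N : ℕ) (M : Fin n → ℤ), 0 < N ∧ Lq M = (N : ℚ) • m := by
  classical
  refine ⟨∏ j, (m j).den, fun i => (m i).num * (((∏ j, (m j).den) / (m i).den : ℕ) : ℤ),
    Finset.prod_pos fun i _ => (m i).pos, ?_⟩
  funext i
  have hd : (m i).den ∣ ∏ j, (m j).den := Finset.dvd_prod_of_mem _ (Finset.mem_univ i)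
  obtain ⟨t, ht⟩ := hd
  have hden : ((m i).den : ℚ) ≠ 0 := by exact_mod_cast (m i).pos.ne'
  have hq : ((m i).num : ℚ) = ((m i).den : ℚ) * m i := by
    rw [mul_comm, Rat.mul_den_eq_num]
  have hdiv : ((∏ j, (m j).den) / (m i).den : ℕ) = t := by
    rw [ht]; exact Nat.mul_div_cancel_left t (m i).pos
  simp only [Lq, Pi.smul_apply, smul_eq_mul]
  rw [hdiv, ht]
  push_cast
  rw [hq]
  ring

lemma separation (hσ : σ = {v | inCone g v}) (hp : Pointed σ)
    (F : Finset (Fin n → ℚ)) (hF : F.Nonempty) (v : Fin n → ℚ)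
    (hv : v ∉ convexHull ℚ (↑F : Set (Fin n → ℚ)) + σ) :
    ∃ M : Fin n → ℤ, Lq M ∈ relIntDual σ ∧ ∀ f ∈ F, dot (Lq M) v < dot (Lq M) f := by
  classical
  set G : ({x // x ∈ F} ⊕ Fin k) → Fin (n+1) → ℚ :=
    Sum.elim (fun f => Fin.snoc f.1 1) (fun i => Fin.snoc (g i) 0) with hG
  have hnc : ¬ inCone G (Fin.snoc v 1) := by
    rintro ⟨c, hc, hsum⟩
    rw [Fintype.sum_sum_type] at hsum
    have hlast := congrFun hsum (Fin.last n)
    have hsum1 : ∑ f : {x // x ∈ F}, c (Sum.inl f) = 1 := by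
      simpa [hG, Finset.sum_apply] using hlast.symm
    have hcast : ∀ j : Fin n, v j =
        (∑ f : {x // x ∈ F}, c (Sum.inl f) * f.1 j) + ∑ i : Fin k, c (Sum.inr i) * g i j := by
      intro j
      have h := congrFun hsum j.castSucc
      simpa [hG, Finset.sum_apply] using h
    apply hv
    have hv_eq : v = (∑ f : {x // x ∈ F}, c (Sum.inl f) • f.1) + ∑ i, c (Sum.inr i) • g i := by
      funext j; simpa [Finset.sum_apply] using hcast j
    rw [hv_eq]
    refine Set.add_mem_add ?_ ?_
    · have hcm := Finset.centerMass_mem_convexHull (Finset.univ : Finset {x // x ∈ F})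
        (w := fun f => c (Sum.inl f)) (fun f _ => hc _) (by rw [hsum1]; norm_num)
        (z := Subtype.val) (fun f _ => f.2)
      rwa [Finset.centerMass_eq_of_sum_1 _ _ hsum1] at hcm
    · rw [hσ]; exact ⟨fun i => c (Sum.inr i), fun i => hc _, rfl⟩
  obtain ⟨W, hW1, hW2⟩ := farkas G _ hnc
  set w : Fin n → ℚ := fun j => W j.castSucc with hw
  set w₀ := W (Fin.last n) with hw0
  have hWf : ∀ f ∈ F, 0 ≤ dot w f + w₀ := by
    intro f hf
    have h := hW1 (Sum.inl ⟨f, hf⟩)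
    simpa [hG, dot_snoc] using h
  have hWg : ∀ i, 0 ≤ dot w (g i) := by
    intro i
    have h := hW1 (Sum.inr i)
    simpa [hG, dot_snoc] using h
  have hWv : dot w v + w₀ < 0 := by simpa [dot_snoc] using hW2
  obtain ⟨m₀, hm01, hm02⟩ := exists_relint_elt hσ hp
  set δ := F.inf' hF (fun f => dot w f - dot w v) with hδdef
  have hδ : 0 < δ := by
    rw [hδdef]
    rw [Finset.lt_inf'_iff]
    intro f hf
    have h := hWf f hf
    linarith
  set Bm := max (F.sup' hF (fun f => dot m₀ v - dot m₀ f)) 1 with hBm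
  have hBm1 : (1:ℚ) ≤ Bm := le_max_right _ _
  set ε := δ / (2 * Bm) with hε
  have hεpos : 0 < ε := div_pos hδ (by linarith)
  set m := w + ε • m₀ with hm
  have hmg : ∀ i, 0 ≤ dot m (g i) := by
    intro i
    rw [hm, dot_add_left, dot_smul_left]
    exact add_nonneg (hWg i) (mul_nonneg hεpos.le (hm01 i))
  have hmg' : ∀ i, g i ≠ 0 → 0 < dot m (g i) := by
    intro i hi
    rw [hm, dot_add_left, dot_smul_left]
    have h2 := hm02 i hi
    nlinarith [hWg i]
  have hmf : ∀ f ∈ F, dot m v < dot m f := by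
    intro f hf
    rw [hm, dot_add_left, dot_add_left, dot_smul_left, dot_smul_left]
    have h1 : δ ≤ dot w f - dot w v := Finset.inf'_le _ hf
    have h2 : dot m₀ v - dot m₀ f ≤ Bm := le_trans (Finset.le_sup' (fun f => dot m₀ v - dot m₀ f) hf) (le_max_left _ _)
    have h3 : ε * (dot m₀ v - dot m₀ f) ≤ ε * Bm := mul_le_mul_of_nonneg_left h2 hεpos.le
    have h4 : ε * Bm = δ / 2 := by
      rw [hε]
      field_simp
    linarith
  obtain ⟨N, M, hNpos, hLq⟩ := exists_int_smul m
  have hNq : (0:ℚ) < N := by exact_mod_cast hNpos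
  have hm_relint : m ∈ relIntDual σ := mem_relIntDual_of hσ hmg hmg'
  refine ⟨M, by rw [hLq]; exact relint_smul hNq hm_relint, ?_⟩
  intro f hf
  rw [hLq, dot_smul_left, dot_smul_left]
  exact mul_lt_mul_of_pos_left (hmf f hf) hNq

lemma subset_core (hσ : σ = {v | inCone g v}) (hp : Pointed σ)
    (F₁ F₂ : Finset (Fin n → ℚ)) (hF₁ : F₁.Nonempty) (hF₂ : F₂.Nonempty)
    (heq : ∀ m : Fin n → ℤ, Lq m ∈ relIntDual σ → ∀ r : ℚ,
      IsLeast ((fun v => dot (Lq m) v) '' (convexHull ℚ (↑F₁ : Set (Fin n → ℚ)) + σ)) r →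
      IsLeast ((fun v => dot (Lq m) v) '' (convexHull ℚ (↑F₂ : Set (Fin n → ℚ)) + σ)) r) :
    convexHull ℚ (↑F₁ : Set (Fin n → ℚ)) + σ ⊆ convexHull ℚ (↑F₂ : Set (Fin n → ℚ)) + σ := by
  intro v hv
  by_contra hv2
  obtain ⟨M, hM, hlt⟩ := separation hσ hp F₂ hF₂ v hv2
  have hL1 := isLeast_support hσ F₁ hF₁ hM.1
  have hL2 := isLeast_support hσ F₂ hF₂ hM.1
  have hL2' := heq M hM _ hL1
  have hr : F₁.inf' hF₁ (fun f => dot (Lq M) f) = F₂.inf' hF₂ (fun f => dot (Lq M) f) :=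
    hL2'.unique hL2
  have hge : F₁.inf' hF₁ (fun f => dot (Lq M) f) ≤ dot (Lq M) v := hL1.2 ⟨v, hv, rfl⟩
  have hlt2 : dot (Lq M) v < F₂.inf' hF₂ (fun f => dot (Lq M) f) := by
    rw [Finset.lt_inf'_iff]
    exact hlt
  rw [hr] at hge
  linarith

end Main

/-- two `σ`-polyhedra with equal support functions on all lattice points in the
relative interior of `σ∨` coincide. -/
theorem statement1 {n : ℕ} (σ : Set (Fin n → ℚ))
    (hσ : IsPolyhedralCone σ) (hσp : Pointed σ)
    (Δ₁ Δ₂ : Set (Fin n → ℚ))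
    (h₁ : IsSigmaPolyhedron σ Δ₁) (h₂ : IsSigmaPolyhedron σ Δ₂)
    (heq : ∀ m : Fin n → ℤ, Lq m ∈ relIntDual σ →
      ∀ r : ℚ, IsLeast ((fun v => dot (Lq m) v) '' Δ₁) r ↔
        IsLeast ((fun v => dot (Lq m) v) '' Δ₂) r) :
    Δ₁ = Δ₂ := by
  obtain ⟨k, g, hσ'⟩ := hσ
  obtain ⟨F₁, hF₁, hΔ₁⟩ := h₁
  obtain ⟨F₂, hF₂, hΔ₂⟩ := h₂
  subst hΔ₁ hΔ₂
  have hσc : σ = {v | inCone g v} := hσ'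
  apply Set.Subset.antisymm
  · exact subset_core hσc hσp F₁ F₂ hF₁ hF₂ (fun m hm r h => (heq m hm r).1 h)
  · exact subset_core hσc hσp F₂ F₁ hF₂ hF₁ (fun m hm r h => (heq m hm r).2 h)

end Paper
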